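/- Define a doubly-indexed family of rational numbers α_{i,j} by α_{i,0} = α_{0,i} = 1 for all i ≥ 0 and the recursion α_{i+1,j+1} = α_{i+1,j} + α_{i,j+1} + (1/2)·∑_{p=0}^{i}∑_{q=0}^{j} binomial(i+j+4, p+q+2)·α_{p,q}·α_{i-p,j-q}. Then all α_{i,j} are positive integers. -/
import Mathlib

lemma central_choose_even (m : ℕ) : 2 ∣ (2 * m + 2).choose (m + 1) := by
  have h1 : (2 * m + 2).choose (m + 1) =
      (2 * m + 1).choose m + (2 * m + 1).choose (m + 1) := by
    rw [show 2 * m + 2 = (2 * m + 1) + 1 by ring, Nat.choose_succ_succ]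
  have h2 : (2 * m + 1).choose m = (2 * m + 1).choose (m + 1) := by
    have := Nat.choose_symm (show m + 1 ≤ 2 * m + 1 by omega)
    rw [show 2 * m + 1 - (m + 1) = m by omega] at this
    exact this
  omega

lemma sum_term_even (c : ℕ → ℕ → ℕ) (i j : ℕ) :
    2 ∣ ∑ p ∈ Finset.range (i + 1), ∑ q ∈ Finset.range (j + 1),
      (i + j + 4).choose (p + q + 2) * c p q * c (i - p) (j - q) := by
  rw [← ZMod.natCast_eq_zero_iff]
  push_cast
  rw [← Finset.sum_product']
  have key : ∀ x : ℕ × ℕ, x ∈ Finset.range (i + 1) ×ˢ Finset.range (j + 1) →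
      (((i + j + 4).choose ((i - x.1) + (j - x.2) + 2) : ZMod 2) *
        c (i - x.1) (j - x.2) * c (i - (i - x.1)) (j - (j - x.2)))
      = ((i + j + 4).choose (x.1 + x.2 + 2) : ZMod 2) * c x.1 x.2 * c (i - x.1) (j - x.2) := by
    intro x hx
    simp only [Finset.mem_product, Finset.mem_range] at hx
    have e1 : i - (i - x.1) = x.1 := Nat.sub_sub_self (by omega)
    have e2 : j - (j - x.2) = x.2 := Nat.sub_sub_self (by omega)
    have ec : (i + j + 4).choose ((i - x.1) + (j - x.2) + 2)
        = (i + j + 4).choose (x.1 + x.2 + 2) := by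
      have h := Nat.choose_symm (show x.1 + x.2 + 2 ≤ i + j + 4 by omega)
      rw [show i + j + 4 - (x.1 + x.2 + 2) = (i - x.1) + (j - x.2) + 2 by omega] at h
      exact h
    rw [e1, e2, ec]; ring
  apply Finset.sum_involution (fun x _ => (i - x.1, j - x.2))
  · intro x hx
    rw [show (((i + j + 4).choose ((i - x.1, j - x.2).1 + (i - x.1, j - x.2).2 + 2) : ZMod 2) *
        c (i - x.1, j - x.2).1 (i - x.1, j - x.2).2 *
        c (i - (i - x.1, j - x.2).1) (j - (i - x.1, j - x.2).2))
        = ((i + j + 4).choose (x.1 + x.2 + 2) : ZMod 2) * c x.1 x.2 * c (i - x.1) (j - x.2)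
      from key x hx]
    exact CharTwo.add_self_eq_zero _
  · intro x hx hne
    simp only [Finset.mem_product, Finset.mem_range] at hx
    intro heq
    have h1 : i - x.1 = x.1 := congrArg Prod.fst heq
    have h2 : j - x.2 = x.2 := congrArg Prod.snd heq
    have hi : i = 2 * x.1 := by omega
    have hj : j = 2 * x.2 := by omega
    apply hne
    have hev : 2 ∣ (i + j + 4).choose (x.1 + x.2 + 2) := by
      rw [hi, hj, show 2 * x.1 + 2 * x.2 + 4 = 2 * (x.1 + x.2 + 1) + 2 by ring,
        show x.1 + x.2 + 2 = (x.1 + x.2 + 1) + 1 by ring]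
      exact central_choose_even _
    have : ((i + j + 4).choose (x.1 + x.2 + 2) : ZMod 2) = 0 := by
      rwa [ZMod.natCast_eq_zero_iff]
    rw [this, zero_mul, zero_mul]
  · intro x hx
    simp only [Finset.mem_product, Finset.mem_range] at hx ⊢
    omega
  · intro x hx
    simp only [Finset.mem_product, Finset.mem_range] at hx
    ext <;> simp <;> omega

theorem alpha_positive_integers (a : ℕ → ℕ → ℚ)
    (h1 : ∀ i, a i 0 = 1) (h2 : ∀ i, a 0 i = 1)
    (hrec : ∀ i j, a (i + 1) (j + 1) = a (i + 1) j + a i (j + 1)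
      + (1 / 2) * ∑ p ∈ Finset.range (i + 1), ∑ q ∈ Finset.range (j + 1),
          ((i + j + 4).choose (p + q + 2) : ℚ) * a p q * a (i - p) (j - q)) :
    ∀ i j, ∃ n : ℕ, 0 < n ∧ a i j = n := by
  have main : ∀ n i j, i + j = n → ∃ k : ℕ, 0 < k ∧ a i j = k := by
    intro n
    induction n using Nat.strong_induction_on with
    | _ n ih =>
      intro i j hij
      cases i with
      | zero => exact ⟨1, one_pos, by rw [h2]; norm_num⟩
      | succ i =>
        cases j with
        | zero => exact ⟨1, one_pos, by rw [h1]; norm_num⟩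
        | succ j =>
          have hn : n = i + j + 2 := by omega
          have key : ∀ p q, p + q < n → ∃ k : ℕ, 0 < k ∧ a p q = k :=
            fun p q h => ih (p + q) h p q rfl
          set c : ℕ → ℕ → ℕ := fun p q =>
            if h : p + q < n then (key p q h).choose else 0 with hcdef
          have hc : ∀ p q, p + q < n → 0 < c p q ∧ a p q = c p q := by
            intro p q h
            rw [hcdef]
            simp only [dif_pos h]
            exact (key p q h).choose_spec
          obtain ⟨k1pos, hk1⟩ := hc (i + 1) j (by omega)
          obtain ⟨k2pos, hk2⟩ := hc i (j + 1) (by omega)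
          have hS : (∑ p ∈ Finset.range (i + 1), ∑ q ∈ Finset.range (j + 1),
              ((i + j + 4).choose (p + q + 2) : ℚ) * a p q * a (i - p) (j - q))
              = ((∑ p ∈ Finset.range (i + 1), ∑ q ∈ Finset.range (j + 1),
                (i + j + 4).choose (p + q + 2) * c p q * c (i - p) (j - q) : ℕ) : ℚ) := by
            push_cast
            refine Finset.sum_congr rfl fun p hp => Finset.sum_congr rfl fun q hq => ?_
            simp only [Finset.mem_range] at hp hq
            rw [(hc p q (by omega)).2, (hc (i - p) (j - q) (by omega)).2]
          obtain ⟨m, hm⟩ := sum_term_even c i j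
          refine ⟨c (i + 1) j + c i (j + 1) + m, by omega, ?_⟩
          rw [hrec i j, hk1, hk2, hS, hm]
          push_cast
          ring
  exact fun i j => main (i + j) i j rfl
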